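/- Let A be an unbounded positive self-adjoint operator on a complex Hilbert space H. On H × H define T with domain D(A) × H by T(x, y) = (0, Ax). Then T is densely defined and closed with adjoint T*(x, y) = (Ay, 0) on H × D(A); T* ∘ T has domain D(A∘A) × H with (T* ∘ T)(x, y) = ((A∘A)x, 0), and T ∘ T* has domain H × D(A∘A) with (T ∘ T*)(x, y) = (0, (A∘A)y); hence the self-commutator T ∘ T* − T* ∘ T, given on D(A∘A) × D(A∘A) by (x, y) ↦ (−(A∘A)x, (A∘A)y), is unbounded. Moreover, the operators P(x, y) = (Ax, 0) on D(A) × H and Q(x, y) = (0, Ay) on H × D(A) are positive self-adjoint with P ∘ P = T* ∘ T and Q ∘ Q = T ∘ T* (so P = |T| and Q = |T*|), and both P ∘ Q and Q ∘ P are zero operators on their respective dense domains, so P ∘ Q − Q ∘ P is bounded. -/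

import Mathlib

/- Unbounded (partially defined) operators on a complex Hilbert space are modelled by
Mathlib's `LinearPMap` (`H →ₗ.[ℂ] H`).  `T†` is the adjoint, `T.IsClosed` means the graph
of `T` is closed, and `f - g` is the difference with domain `D(f) ⊓ D(g)`. -/

noncomputable section

open LinearPMap

/-- The composition `S ∘ T` of two partially defined linear operators, with its natural
(maximal) domain `{x ∈ D(T) : T x ∈ D(S)}`, acting by `x ↦ S (T x)`. -/
def pComp {R E F G : Type*} [Ring R] [AddCommGroup E] [Module R E]
    [AddCommGroup F] [Module R F] [AddCommGroup G] [Module R G]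
    (S : F →ₗ.[R] G) (T : E →ₗ.[R] F) : E →ₗ.[R] G where
  domain := (S.domain.comap T.toFun).map T.domain.subtype
  toFun := (S.toFun.comp (T.toFun.restrict (q := S.domain) fun _ hx => hx)).comp
    (Submodule.equivMapOfInjective T.domain.subtype T.domain.injective_subtype
      (S.domain.comap T.toFun)).symm.toLinearMap

/-- A partially defined operator is bounded if `‖T x‖ ≤ C‖x‖` on its domain for some `C ≥ 0`. -/
def IsBddOp {H : Type*} [NormedAddCommGroup H] [InnerProductSpace ℂ H]
    (T : H →ₗ.[ℂ] H) : Prop :=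
  ∃ C : ℝ, 0 ≤ C ∧ ∀ x : T.domain, ‖T x‖ ≤ C * ‖(x : H)‖

/-- A partially defined operator is positive if `⟪T x, x⟫` is real and nonnegative
for every `x` in its domain. -/
def IsPosOp {H : Type*} [NormedAddCommGroup H] [InnerProductSpace ℂ H]
    (T : H →ₗ.[ℂ] H) : Prop :=
  ∀ x : T.domain, 0 ≤ (inner ℂ (T x) ((x : H)) : ℂ).re ∧ (inner ℂ (T x) ((x : H)) : ℂ).im = 0

/-- A (bundled) complex Hilbert space. -/
structure HilbertC where
  carrier : Type
  [normed : NormedAddCommGroup carrier]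
  [ips : InnerProductSpace ℂ carrier]
  [complete : CompleteSpace carrier]

attribute [instance] HilbertC.normed HilbertC.ips HilbertC.complete

/-- The product Hilbert space `H × H` (with inner ℂ product
`⟪(x₁,y₁),(x₂,y₂)⟫ = ⟪x₁,x₂⟫ + ⟪y₁,y₂⟫`), i.e. the `L²`-product `WithLp 2 (H × H)`. -/
abbrev HxH (H : Type) [NormedAddCommGroup H] [InnerProductSpace ℂ H] : Type :=
  WithLp 2 (H × H)

/-- The canonical linear identification of the product Hilbert space `HxH H` with `H × H`. -/
abbrev prodE (H : Type) [NormedAddCommGroup H] [InnerProductSpace ℂ H] :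
    HxH H ≃ₗ[ℂ] H × H := WithLp.linearEquiv 2 ℂ (H × H)

variable {R E F G : Type*} [Ring R] [AddCommGroup E] [Module R E]
    [AddCommGroup F] [Module R F] [AddCommGroup G] [Module R G]
    (S : F →ₗ.[R] G) (T : E →ₗ.[R] F)

theorem mem_pComp_domain {x : E} :
    x ∈ (pComp S T).domain ↔ ∃ h : x ∈ T.domain, T ⟨x, h⟩ ∈ S.domain := by
  constructor
  · rintro ⟨y, hy, rfl⟩
    exact ⟨y.2, hy⟩
  · rintro ⟨h, h2⟩
    exact ⟨⟨x, h⟩, h2, rfl⟩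

theorem pComp_apply (x : (pComp S T).domain) (h1 : (x : E) ∈ T.domain)
    (h2 : T ⟨(x : E), h1⟩ ∈ S.domain) :
    pComp S T x = S ⟨T ⟨(x : E), h1⟩, h2⟩ := by
  set e := Submodule.equivMapOfInjective T.domain.subtype T.domain.injective_subtype
      (S.domain.comap T.toFun)
  have hx : x = e ⟨⟨(x : E), h1⟩, h2⟩ := by
    apply Subtype.ext
    rfl
  have h3 : e.symm x = ⟨⟨(x : E), h1⟩, h2⟩ := by
    exact (LinearEquiv.symm_apply_eq e).mpr hx
  show (S.toFun.comp (T.toFun.restrict (q := S.domain) fun _ hx => hx)).comp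
      e.symm.toLinearMap x = _
  exact congrArg (fun w => S.toFun ((T.toFun.restrict (q := S.domain) fun _ hx => hx) w)) h3

set_option linter.unusedSectionVars false
section Hilbert

variable {H₁ H₂ : Type*} [NormedAddCommGroup H₁] [InnerProductSpace ℂ H₁] [CompleteSpace H₁]
  [NormedAddCommGroup H₂] [InnerProductSpace ℂ H₂] [CompleteSpace H₂]

theorem adjoint_graph_mem {T : H₁ →ₗ.[ℂ] H₂} (hT : Dense (T.domain : Set H₁)) {y : H₂} {z : H₁} :
    (∃ hy : y ∈ (T†).domain, T† ⟨y, hy⟩ = z) ↔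
      ∀ x : T.domain, (inner ℂ z (x : H₁) : ℂ) = inner ℂ y (T x) := by
  constructor
  · rintro ⟨hy, rfl⟩
    intro x
    exact adjoint_isFormalAdjoint hT ⟨y, hy⟩ x
  · intro h
    have hy : y ∈ (T†).domain := mem_adjoint_domain_of_exists y ⟨z, h⟩
    exact ⟨hy, adjoint_apply_eq hT ⟨y, hy⟩ h⟩

theorem adjoint_isClosed {T : H₁ →ₗ.[ℂ] H₂} (hT : Dense (T.domain : Set H₁)) :
    (T†).IsClosed := by
  have : ((T†).graph : Set (H₂ × H₁)) =
      ⋂ x : T.domain, {p : H₂ × H₁ | (inner ℂ p.2 (x : H₁) : ℂ) = inner ℂ p.1 (T x)} := by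
    ext p
    simp only [SetLike.mem_coe, LinearPMap.mem_graph_iff, Set.mem_iInter, Set.mem_setOf_eq]
    constructor
    · rintro ⟨y, h1, h2⟩ x
      have := (adjoint_graph_mem hT (y := p.1) (z := p.2)).mp ⟨h1 ▸ y.2, by
        rw [← h2]; congr 1; exact Subtype.ext h1.symm⟩
      exact this x
    · intro h
      obtain ⟨hy, hz⟩ := (adjoint_graph_mem hT (y := p.1) (z := p.2)).mpr h
      exact ⟨⟨p.1, hy⟩, rfl, hz⟩
  rw [LinearPMap.IsClosed, this]
  exact isClosed_iInter fun x => isClosed_eq (continuous_snd.inner continuous_const)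
    (continuous_fst.inner continuous_const)

variable {A : H₁ →ₗ.[ℂ] H₁} (hsa : A† = A)
include hsa

theorem sa_dense : Dense (A.domain : Set H₁) :=
  (LinearPMap.isSelfAdjoint_def.mpr hsa).dense_domain

theorem sa_isClosed : A.IsClosed := hsa ▸ _root_.adjoint_isClosed (sa_dense hsa)

theorem sa_symm : ∀ x y : A.domain, (inner ℂ (A x) (y : H₁) : ℂ) = inner ℂ (x : H₁) (A y) := by
  have h := adjoint_isFormalAdjoint (T := A) (sa_dense hsa)
  rw [hsa] at h
  exact h

end Hilbert

theorem LinearPMap.congr_fun' {R E F : Type*} [Ring R] [AddCommGroup E] [Module R E]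
    [AddCommGroup F] [Module R F] {f g : E →ₗ.[R] F} (h : f = g) (x : f.domain) :
    f x = g ⟨(x : E), h ▸ x.2⟩ := by
  subst h; rfl

section SA

variable {H : Type*} [NormedAddCommGroup H] [InnerProductSpace ℂ H] [CompleteSpace H]
variable {A : H →ₗ.[ℂ] H} (hsa : A† = A) (hpos : IsPosOp A)
include hsa hpos

theorem sa_norm_le (x : A.domain) : ‖(x : H)‖ ≤ ‖(x : H) + A x‖ := by
  have h3 : (inner ℂ (x : H) (x : H) : ℂ) = (‖(x : H)‖ : ℂ) ^ 2 := inner_self_eq_norm_sq_to_K _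
  have h1 : ((‖(x : H)‖ : ℝ) ^ 2 : ℝ) ≤ (inner ℂ ((x : H) + A x) ((x : H)) : ℂ).re := by
    rw [inner_add_left, h3]
    have h2 := (hpos x).1
    simp only [Complex.add_re]
    have : ((‖(x : H)‖ : ℂ) ^ 2).re = ‖(x : H)‖ ^ 2 := by
      norm_cast
    linarith
  have h4 : (inner ℂ ((x : H) + A x) ((x : H)) : ℂ).re ≤ ‖(x : H) + A x‖ * ‖(x : H)‖ := by
    calc (inner ℂ ((x : H) + A x) ((x : H)) : ℂ).re ≤ ‖(inner ℂ ((x : H) + A x) ((x : H)) : ℂ)‖ :=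
          Complex.re_le_norm _
    _ = ‖(inner ℂ ((x : H) + A x) ((x : H)) : ℂ)‖ := rfl
    _ ≤ ‖(x : H) + A x‖ * ‖(x : H)‖ := norm_inner_le_norm _ _
  rcases eq_or_lt_of_le (norm_nonneg (x : H)) with h | h
  · rw [← h]; positivity
  · nlinarith

/-- `1 + A` is surjective. -/
theorem sa_onePlus_surj (y : H) : ∃ x : A.domain, (x : H) + A x = y := by
  set L : A.domain →ₗ[ℂ] H := A.domain.subtype + A.toFun with hL
  have hLx : ∀ x : A.domain, L x = (x : H) + A x := fun x => rfl
  set M : Submodule ℂ H := LinearMap.range L with hM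
  -- M is closed
  have hMc : IsClosed (M : Set H) := by
    apply IsSeqClosed.isClosed
    intro u z hu hz
    choose v hv using hu
    have hAc := sa_isClosed hsa
    have hucau : CauchySeq u := hz.cauchySeq
    have hcau : CauchySeq (fun n => (v n : H)) := by
      rw [Metric.cauchySeq_iff] at hucau ⊢
      intro ε hε
      obtain ⟨N, hN⟩ := hucau ε hε
      refine ⟨N, fun m hm n hn => ?_⟩
      rw [dist_eq_norm]
      have h5 := sa_norm_le hsa hpos (v m - v n)
      calc ‖(v m : H) - (v n : H)‖ = ‖((v m - v n : A.domain) : H)‖ := by norm_cast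
      _ ≤ ‖((v m - v n : A.domain) : H) + A (v m - v n)‖ := h5
      _ = ‖u m - u n‖ := by
          rw [← hv m, ← hv n, hLx, hLx, LinearPMap.map_sub]
          push_cast
          congr 1
          abel
      _ < ε := by rw [← dist_eq_norm]; exact hN m hm n hn
    obtain ⟨x, hx⟩ := cauchySeq_tendsto_of_complete hcau
    have hAv : ∀ n, A (v n) = u n - (v n : H) := by
      intro n
      rw [← hv n, hLx]
      abel
    have hx2 : Filter.Tendsto (fun n => A (v n)) Filter.atTop (nhds (z - x)) := by
      simp only [hAv]
      exact hz.sub hx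
    have hmem : (x, z - x) ∈ A.graph := by
      have ht : Filter.Tendsto (fun n => ((v n : H), A (v n))) Filter.atTop (nhds (x, z - x)) :=
        hx.prodMk_nhds hx2
      exact hAc.mem_of_tendsto ht (Filter.Eventually.of_forall fun n => A.mem_graph (v n))
    rw [LinearPMap.mem_graph_iff] at hmem
    obtain ⟨w, hw1, hw2⟩ := hmem
    rw [SetLike.mem_coe, hM, LinearMap.mem_range]
    refine ⟨w, ?_⟩
    rw [hLx, hw1, hw2]
    module
  -- Mᗮ = ⊥
  have hMperp : Mᗮ = ⊥ := by
    rw [Submodule.eq_bot_iff]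
    intro z hz
    have h0 : ∀ x : A.domain, (inner ℂ ((x : H) + A x) z : ℂ) = 0 := fun x =>
      (Submodule.mem_orthogonal M z).mp hz _ ⟨x, rfl⟩
    have hx : ∀ x : A.domain, (inner ℂ (-z) (x : H) : ℂ) = inner ℂ z (A x) := by
      intro x
      have h1 := h0 x
      rw [inner_add_left] at h1
      have h2 : (inner ℂ (A x) z : ℂ) = - inner ℂ (x : H) z := by linear_combination h1
      rw [inner_neg_left, ← inner_conj_symm z ((A x : H)), h2, RingHom.map_neg, inner_conj_symm z ((x : H))]
    have hzd : z ∈ (A†).domain := mem_adjoint_domain_of_exists z ⟨-z, hx⟩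
    have hAz : A† ⟨z, hzd⟩ = -z := adjoint_apply_eq (sa_dense hsa) ⟨z, hzd⟩ hx
    have hzd' : z ∈ A.domain := hsa ▸ hzd
    have hAz' : A ⟨z, hzd'⟩ = -z := by
      rw [← LinearPMap.congr_fun' hsa ⟨z, hzd⟩]
      exact hAz
    have hp := (hpos ⟨z, hzd'⟩).1
    rw [hAz'] at hp
    have : (inner ℂ (-z) z : ℂ).re = - ‖z‖ ^ 2 := by
      rw [inner_neg_left, inner_self_eq_norm_sq_to_K]
      norm_cast
    rw [this] at hp
    have hz0 : ‖z‖ = 0 := by nlinarith [norm_nonneg z, sq_nonneg ‖z‖]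
    exact norm_eq_zero.mp hz0
  have hMtop : M = ⊤ := by
    have h1 : M.topologicalClosure = ⊤ := Submodule.topologicalClosure_eq_top_iff.mpr hMperp
    rw [← h1, hMc.submodule_topologicalClosure_eq]
  have : y ∈ M := hMtop ▸ Submodule.mem_top
  obtain ⟨x, hxy⟩ := this
  exact ⟨x, by rw [← hLx]; exact hxy⟩

theorem sa_sq_dense : Dense ((pComp A A).domain : Set H) := by
  rw [Submodule.dense_iff_topologicalClosure_eq_top, Submodule.topologicalClosure_eq_top_iff,
    Submodule.eq_bot_iff]
  intro y hy
  obtain ⟨s, hs⟩ := sa_onePlus_surj hsa hpos y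
  have hs0 : ∀ x : A.domain, (inner ℂ (s : H) ((x : A.domain) : H) : ℂ) = 0 := by
    intro x
    obtain ⟨r, hr⟩ := sa_onePlus_surj hsa hpos (x : H)
    have hAr : A r = (x : H) - (r : H) := by rw [← hr]; abel
    have hrmem : (r : H) ∈ (pComp A A).domain := by
      rw [mem_pComp_domain]
      refine ⟨r.2, ?_⟩
      have : (⟨(r : H), r.2⟩ : A.domain) = r := Subtype.ext rfl
      rw [this, hAr]
      exact Submodule.sub_mem _ x.2 r.2
    have horth : (inner ℂ ((r : H)) y : ℂ) = 0 :=
      (Submodule.mem_orthogonal _ y).mp hy (r : H) hrmem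
    calc (inner ℂ (s : H) ((x : A.domain) : H) : ℂ) = inner ℂ (s : H) ((r : H) + A r) := by rw [hr]
    _ = inner ℂ (s : H) ((r : H) : H) + inner ℂ (s : H) (A r) := inner_add_right _ _ _
    _ = inner ℂ (s : H) ((r : H) : H) + inner ℂ (A s) ((r : H) : H) := by rw [sa_symm hsa s r]
    _ = inner ℂ ((s : H) + A s) ((r : H) : H) := (inner_add_left _ _ _).symm
    _ = inner ℂ y ((r : H) : H) := by rw [hs]
    _ = 0 := by rw [← inner_conj_symm y ((r : H) : H), horth]; simp
  have hsz : (s : H) = 0 := (sa_dense hsa).eq_zero_of_inner_left ℂ (fun v hv => hs0 ⟨v, hv⟩)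
  have hs' : s = 0 := Subtype.ext hsz
  rw [← hs, hs']
  simp

theorem sa_bound_of_sq_bound {c : ℝ} (hc : 0 ≤ c)
    (hb : ∀ (x : A.domain), A x ∈ A.domain → ‖A x‖ ≤ c * ‖(x : H)‖) :
    ∀ x : A.domain, ‖A x‖ ≤ c * ‖(x : H)‖ := by
  intro y
  set g : H := A y with hg
  have key : ∀ x ∈ ((pComp A A).domain : Set H), ‖(inner ℂ g x : ℂ)‖ ≤ (‖(y : H)‖ * c) * ‖x‖ := by
    intro x hx
    rw [SetLike.mem_coe, mem_pComp_domain] at hx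
    obtain ⟨h1, h2⟩ := hx
    have hsym := sa_symm hsa y ⟨x, h1⟩
    calc ‖(inner ℂ g x : ℂ)‖ = ‖(inner ℂ ((y : H)) (A ⟨x, h1⟩) : ℂ)‖ := by rw [hg, hsym]
    _ ≤ ‖(y : H)‖ * ‖A ⟨x, h1⟩‖ := norm_inner_le_norm _ _
    _ ≤ ‖(y : H)‖ * (c * ‖x‖) := by
        have := hb ⟨x, h1⟩ h2
        exact mul_le_mul_of_nonneg_left this (norm_nonneg _)
    _ = (‖(y : H)‖ * c) * ‖x‖ := by ring
  have keyall : ∀ x : H, ‖(inner ℂ g x : ℂ)‖ ≤ (‖(y : H)‖ * c) * ‖x‖ := by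
    have hcl : IsClosed {x : H | ‖(inner ℂ g x : ℂ)‖ ≤ (‖(y : H)‖ * c) * ‖x‖} :=
      isClosed_le (Continuous.norm (continuous_const.inner continuous_id))
        (continuous_const.mul continuous_norm)
    intro x
    have hsub := closure_minimal key hcl
    have hmem : x ∈ closure ((pComp A A).domain : Set H) := sa_sq_dense hsa hpos x
    exact hsub hmem
  have hgg := keyall g
  have hginner : ‖(inner ℂ g g : ℂ)‖ = ‖g‖ ^ 2 := by
    rw [inner_self_eq_norm_sq_to_K]
    norm_cast
    simp [abs_of_nonneg (norm_nonneg g), sq_abs]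
  rw [hginner] at hgg
  rcases eq_or_lt_of_le (norm_nonneg g) with h | h
  · have h0 : ‖A y‖ = 0 := h.symm
    rw [h0]
    positivity
  · have : ‖g‖ ≤ ‖(y : H)‖ * c := by nlinarith
    calc ‖A y‖ = ‖g‖ := rfl
    _ ≤ ‖(y : H)‖ * c := this
    _ = c * ‖(y : H)‖ := by ring

end SA

set_option linter.unusedSectionVars false
variable {H : Type} [NormedAddCommGroup H] [InnerProductSpace ℂ H] [CompleteSpace H]

def put (i : Bool) (a : H) : HxH H := (prodE H).symm (cond i (a, 0) (0, a))
def getc (i : Bool) (z : HxH H) : H := cond i (prodE H z).1 (prodE H z).2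

example : CompleteSpace (HxH H) := by infer_instance

theorem prodE_eq_CLE (z : HxH H) :
    prodE H z = (WithLp.prodContinuousLinearEquiv (p := 2) (𝕜 := ℂ) (α := H) (β := H)) z := rfl

theorem getc_put (i : Bool) (a : H) : getc i (put i a) = a := by cases i <;> rfl

theorem inner_put_left (i : Bool) (a : H) (z : HxH H) :
    (inner ℂ (put i a) z : ℂ) = inner ℂ a (getc i z) := by
  cases i <;> simp [put, getc, WithLp.prod_inner_apply] <;> rfl

theorem inner_put_right (i : Bool) (a : H) (z : HxH H) :
    (inner ℂ z (put i a) : ℂ) = inner ℂ (getc i z) a := by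
  cases i <;> simp [put, getc, WithLp.prod_inner_apply] <;> rfl

theorem norm_put (i : Bool) (a : H) : ‖put i a‖ = ‖a‖ := by
  have h : ‖put i a‖ ^ 2 = ‖a‖ ^ 2 := by
    rw [WithLp.prod_norm_sq_eq_of_L2]
    cases i <;> simp [put] <;> rfl
  rw [← Real.sqrt_sq (norm_nonneg (put i a)), h, Real.sqrt_sq (norm_nonneg a)]

theorem norm_getc_le (i : Bool) (z : HxH H) : ‖getc i z‖ ≤ ‖z‖ := by
  have h : ‖getc i z‖ ^ 2 ≤ ‖z‖ ^ 2 := by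
    rw [WithLp.prod_norm_sq_eq_of_L2]
    have h1 : z.fst = (prodE H z).1 := rfl
    have h2 : z.snd = (prodE H z).2 := rfl
    rw [h1, h2]
    cases i <;> simp [getc] <;> nlinarith [sq_nonneg ‖(prodE H z).1‖, sq_nonneg ‖(prodE H z).2‖]
  nlinarith [norm_nonneg (getc i z), norm_nonneg z]

theorem continuous_getc (i : Bool) : Continuous (getc (H := H) i) := by
  have hc : Continuous fun z : HxH H => prodE H z := by
    rw [show (fun z : HxH H => prodE H z) = (WithLp.prodContinuousLinearEquiv (p := 2) (𝕜 := ℂ) (α := H) (β := H)) from rfl]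
    exact (WithLp.prodContinuousLinearEquiv (p := 2) (𝕜 := ℂ) (α := H) (β := H)).continuous
  cases i
  · exact continuous_snd.comp hc
  · exact continuous_fst.comp hc

def pr (i : Bool) (K : Submodule ℂ H) : Submodule ℂ (H × H) :=
  cond i (K.prod ⊤) (Submodule.prod ⊤ K)

theorem mem_prcomap {i : Bool} {K : Submodule ℂ H} {z : HxH H} :
    z ∈ (pr i K).comap (prodE H).toLinearMap ↔ getc i z ∈ K := by
  cases i <;> simp [pr, getc, Submodule.mem_comap, Submodule.mem_prod]

theorem dense_prcomap {i : Bool} {K : Submodule ℂ H} (hK : Dense (K : Set H)) :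
    Dense (((pr i K).comap (prodE H).toLinearMap : Submodule ℂ (HxH H)) : Set (HxH H)) := by
  have he : IsOpenQuotientMap (fun z : HxH H => prodE H z) := by
    refine ⟨(prodE H).surjective, ?_, ?_⟩
    · exact (WithLp.prodContinuousLinearEquiv (p := 2) (𝕜 := ℂ) (α := H) (β := H)).continuous
    · exact (WithLp.prodContinuousLinearEquiv (p := 2) (𝕜 := ℂ) (α := H) (β := H)).toHomeomorph.isOpenMap
  have hset : (((pr i K).comap (prodE H).toLinearMap : Submodule ℂ (HxH H)) : Set (HxH H))
      = (fun z : HxH H => prodE H z) ⁻¹' ((pr i K : Set (H × H))) := rfl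
  rw [hset, he.dense_preimage_iff]
  have : Dense ((K : Set H) ×ˢ (Set.univ : Set H)) := hK.prod dense_univ
  have h2 : Dense ((Set.univ : Set H) ×ˢ (K : Set H)) := dense_univ.prod hK
  cases i
  · simpa [pr, Submodule.prod_coe] using h2
  · simpa [pr, Submodule.prod_coe] using this

theorem getc_put_not (i : Bool) (a : H) : getc (!i) (put i a) = 0 := by cases i <;> rfl

theorem hxh_ext {j : Bool} {z w : HxH H} (h1 : getc j z = getc j w)
    (h2 : getc (!j) z = getc (!j) w) : z = w := by
  apply (prodE H).injective
  cases j
  · exact Prod.ext h2 h1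
  · exact Prod.ext h1 h2

theorem prodE_put (j : Bool) (a : H) :
    prodE H (put j a) = cond j (a, 0) (0, a) :=
  (prodE H).apply_symm_apply _

theorem adj_coord {A : H →ₗ.[ℂ] H} (hsa : A† = A) (i j : Bool) {W : HxH H →ₗ.[ℂ] HxH H}
    (hWdom : W.domain = (pr i A.domain).comap (prodE H).toLinearMap)
    (hW : ∀ (x : W.domain) (h : getc i (x : HxH H) ∈ A.domain),
      (W x : HxH H) = put j (A ⟨getc i (x : HxH H), h⟩)) :
    ((W†).domain = (pr j A.domain).comap (prodE H).toLinearMap) ∧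
    (∀ (y : (W†).domain) (h : getc j (y : HxH H) ∈ A.domain),
      W† y = put i (A ⟨getc j (y : HxH H), h⟩)) := by
  have hAd : Dense (A.domain : Set H) := sa_dense hsa
  have hWd : Dense (W.domain : Set (HxH H)) := by rw [hWdom]; exact dense_prcomap hAd
  have hWin : ∀ x : W.domain, getc i (x : HxH H) ∈ A.domain := fun x =>
    mem_prcomap.mp (by rw [← hWdom]; exact x.2)
  have key : ∀ (y : HxH H) (hy : getc j y ∈ A.domain) (x : W.domain),
      (inner ℂ (put i (A ⟨getc j y, hy⟩)) ((x : HxH H)) : ℂ) = inner ℂ y (W x) := by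
    intro y hy x
    rw [inner_put_left, hW x (hWin x), inner_put_right]
    exact sa_symm hsa ⟨getc j y, hy⟩ ⟨getc i (x : HxH H), hWin x⟩
  have hdom : ∀ y : HxH H, y ∈ (W†).domain ↔ getc j y ∈ A.domain := by
    intro y
    constructor
    · intro hy
      have hmemA : getc j y ∈ (A†).domain := by
        apply mem_adjoint_domain_of_exists
        refine ⟨getc i ((W† ⟨y, hy⟩ : HxH H)), fun b => ?_⟩
        have hmem : (put i (b : H) : HxH H) ∈ W.domain := by
          rw [hWdom]
          exact mem_prcomap.mpr (by rw [getc_put]; exact b.2)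
        have hfa := adjoint_isFormalAdjoint hWd ⟨y, hy⟩ ⟨put i (b : H), hmem⟩
        have hWx : (W ⟨put i (b : H), hmem⟩ : HxH H) = put j (A b) := by
          have hm2 : getc i ((put i (b : H)) : HxH H) ∈ A.domain := by
            rw [getc_put]; exact b.2
          rw [hW ⟨put i (b : H), hmem⟩ hm2]
          have he : (⟨getc i (put i (b : H)), hm2⟩ : A.domain) = b :=
            Subtype.ext (getc_put i (b : H))
          rw [he]
        rw [inner_put_right, hWx, inner_put_right] at hfa
        exact hfa
      rw [hsa] at hmemA
      exact hmemA
    · intro hy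
      exact mem_adjoint_domain_of_exists _ ⟨put i (A ⟨getc j y, hy⟩), key y hy⟩
  refine ⟨Submodule.ext fun z => (hdom z).trans mem_prcomap.symm, fun y h => ?_⟩
  exact adjoint_apply_eq hWd y (key (y : HxH H) h)

theorem coord_isClosed {A : H →ₗ.[ℂ] H} (hAc : A.IsClosed) (i j : Bool)
    {W : HxH H →ₗ.[ℂ] HxH H}
    (hWdom : W.domain = (pr i A.domain).comap (prodE H).toLinearMap)
    (hW : ∀ (x : W.domain) (h : getc i (x : HxH H) ∈ A.domain),
      (W x : HxH H) = put j (A ⟨getc i (x : HxH H), h⟩)) : W.IsClosed := by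
  have hWin : ∀ x : W.domain, getc i (x : HxH H) ∈ A.domain := fun x =>
    mem_prcomap.mp (by rw [← hWdom]; exact x.2)
  have hgr : (W.graph : Set (HxH H × HxH H)) =
      {p | getc (!j) p.2 = 0} ∩ {p | (getc i p.1, getc j p.2) ∈ (A.graph : Set (H × H))} := by
    ext p
    simp only [SetLike.mem_coe, LinearPMap.mem_graph_iff, Set.mem_inter_iff, Set.mem_setOf_eq]
    constructor
    · rintro ⟨x, h1, h2⟩
      rw [← h1, ← h2, hW x (hWin x)]
      refine ⟨getc_put_not _ _, ?_⟩
      rw [getc_put]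
      exact ⟨⟨getc i (x : HxH H), hWin x⟩, rfl, rfl⟩
    · rintro ⟨h0, hg⟩
      obtain ⟨u, hu1, hu2⟩ := hg
      have hp1 : p.1 ∈ W.domain := by
        rw [hWdom]
        exact mem_prcomap.mpr (hu1 ▸ u.2)
      refine ⟨⟨p.1, hp1⟩, rfl, ?_⟩
      have hval := hW ⟨p.1, hp1⟩ (hu1 ▸ u.2)
      rw [hval]
      apply hxh_ext (j := j)
      · rw [getc_put]
        rw [← hu2]
        congr 1
        exact Subtype.ext hu1.symm
      · rw [getc_put_not, h0]
  rw [LinearPMap.IsClosed, hgr]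
  have hc2 : Continuous fun p : HxH H × HxH H => (getc i p.1, getc j p.2) :=
    ((continuous_getc i).comp continuous_fst).prodMk ((continuous_getc j).comp continuous_snd)
  exact IsClosed.inter
    (isClosed_eq ((continuous_getc (!j)).comp continuous_snd) continuous_const)
    (IsClosed.preimage hc2 hAc)

theorem put_zero (j : Bool) : (put j (0 : H)) = 0 := by
  cases j <;> simp [put]

theorem pComp_coord_match {A : H →ₗ.[ℂ] H} (i k j : Bool)
    {W1 W2 : HxH H →ₗ.[ℂ] HxH H}
    (h1dom : W1.domain = (pr i A.domain).comap (prodE H).toLinearMap)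
    (h1 : ∀ (x : W1.domain) (h : getc i (x : HxH H) ∈ A.domain),
      (W1 x : HxH H) = put k (A ⟨getc i (x : HxH H), h⟩))
    (h2dom : W2.domain = (pr k A.domain).comap (prodE H).toLinearMap)
    (h2 : ∀ (x : W2.domain) (h : getc k (x : HxH H) ∈ A.domain),
      (W2 x : HxH H) = put j (A ⟨getc k (x : HxH H), h⟩)) :
    ((pComp W2 W1).domain = (pr i (pComp A A).domain).comap (prodE H).toLinearMap) ∧
    (∀ (z : (pComp W2 W1).domain) (h : getc i (z : HxH H) ∈ (pComp A A).domain),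
      (pComp W2 W1 z : HxH H) = put j (pComp A A ⟨getc i (z : HxH H), h⟩)) := by
  have hdom : ∀ z : HxH H, z ∈ (pComp W2 W1).domain ↔ getc i z ∈ (pComp A A).domain := by
    intro z
    rw [mem_pComp_domain, mem_pComp_domain]
    constructor
    · rintro ⟨hz, hz2⟩
      have hzi : getc i z ∈ A.domain := mem_prcomap.mp (h1dom ▸ hz)
      refine ⟨hzi, ?_⟩
      have hv := h1 ⟨z, hz⟩ hzi
      have := mem_prcomap.mp (h2dom ▸ hz2)
      rw [hv, getc_put] at this
      exact this
    · rintro ⟨hzi, hzA⟩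
      have hz : z ∈ W1.domain := h1dom ▸ mem_prcomap.mpr hzi
      refine ⟨hz, ?_⟩
      rw [h2dom]
      apply mem_prcomap.mpr
      rw [h1 ⟨z, hz⟩ hzi, getc_put]
      exact hzA
  constructor
  · exact Submodule.ext fun z => (hdom z).trans mem_prcomap.symm
  · intro z h
    obtain ⟨hzi, hzA⟩ := (mem_pComp_domain A A).mp h
    have hz1 : (z : HxH H) ∈ W1.domain := h1dom ▸ mem_prcomap.mpr hzi
    have hz2 : (W1 ⟨(z : HxH H), hz1⟩ : HxH H) ∈ W2.domain := by
      rw [h2dom]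
      apply mem_prcomap.mpr
      rw [h1 ⟨(z : HxH H), hz1⟩ hzi, getc_put]
      exact hzA
    rw [pComp_apply W2 W1 z hz1 hz2]
    have hk : getc k ((W1 ⟨(z : HxH H), hz1⟩ : HxH H)) ∈ A.domain := by
      rw [h1 ⟨(z : HxH H), hz1⟩ hzi, getc_put]; exact hzA
    rw [h2 ⟨_, hz2⟩ hk]
    congr 1
    rw [pComp_apply A A ⟨getc i (z : HxH H), h⟩ hzi hzA]
    congr 1
    apply Subtype.ext
    show getc k ((W1 ⟨(z : HxH H), hz1⟩ : HxH H)) = _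
    rw [h1 ⟨(z : HxH H), hz1⟩ hzi, getc_put]

theorem pComp_coord_mismatch {A : H →ₗ.[ℂ] H} (i k j : Bool)
    {W1 W2 : HxH H →ₗ.[ℂ] HxH H}
    (h1dom : W1.domain = (pr i A.domain).comap (prodE H).toLinearMap)
    (h1 : ∀ (x : W1.domain) (h : getc i (x : HxH H) ∈ A.domain),
      (W1 x : HxH H) = put k (A ⟨getc i (x : HxH H), h⟩))
    (h2dom : W2.domain = (pr (!k) A.domain).comap (prodE H).toLinearMap)
    (h2 : ∀ (x : W2.domain) (h : getc (!k) (x : HxH H) ∈ A.domain),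
      (W2 x : HxH H) = put j (A ⟨getc (!k) (x : HxH H), h⟩)) :
    ((pComp W2 W1).domain = (pr i A.domain).comap (prodE H).toLinearMap) ∧
    (∀ z : (pComp W2 W1).domain, (pComp W2 W1 z : HxH H) = 0) := by
  have hdom : ∀ z : HxH H, z ∈ (pComp W2 W1).domain ↔ getc i z ∈ A.domain := by
    intro z
    rw [mem_pComp_domain]
    constructor
    · rintro ⟨hz, _⟩
      exact mem_prcomap.mp (h1dom ▸ hz)
    · intro hzi
      have hz : z ∈ W1.domain := h1dom ▸ mem_prcomap.mpr hzi
      refine ⟨hz, ?_⟩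
      rw [h2dom]
      apply mem_prcomap.mpr
      rw [h1 ⟨z, hz⟩ hzi, getc_put_not]
      exact Submodule.zero_mem _
  refine ⟨Submodule.ext fun z => (hdom z).trans mem_prcomap.symm, ?_⟩
  intro z
  have hzi : getc i (z : HxH H) ∈ A.domain := (hdom _).mp z.2
  have hz1 : (z : HxH H) ∈ W1.domain := h1dom ▸ mem_prcomap.mpr hzi
  have hz2 : (W1 ⟨(z : HxH H), hz1⟩ : HxH H) ∈ W2.domain := by
    rw [h2dom]
    apply mem_prcomap.mpr
    rw [h1 ⟨(z : HxH H), hz1⟩ hzi, getc_put_not]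
    exact Submodule.zero_mem _
  rw [pComp_apply W2 W1 z hz1 hz2]
  have hk : getc (!k) ((W1 ⟨(z : HxH H), hz1⟩ : HxH H)) ∈ A.domain := by
    rw [h1 ⟨(z : HxH H), hz1⟩ hzi, getc_put_not]
    exact Submodule.zero_mem _
  rw [h2 ⟨_, hz2⟩ hk]
  have h0 : (⟨getc (!k) ((W1 ⟨(z : HxH H), hz1⟩ : HxH H)), hk⟩ : A.domain) = 0 := by
    apply Subtype.ext
    show getc (!k) _ = (0 : H)
    rw [h1 ⟨(z : HxH H), hz1⟩ hzi, getc_put_not]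
  rw [h0, LinearPMap.map_zero, put_zero]

/-- Let `A` be an unbounded positive self-adjoint operator on a complex Hilbert space `H`.
On `H × H` define `T` with domain `D(A) × H` by `T (x, y) = (0, A x)`.  Then `T` is densely
defined and closed with adjoint `T† (x, y) = (A y, 0)` on `H × D(A)`; `T† ∘ T` has domain
`D(A∘A) × H` with `(T† ∘ T) (x, y) = ((A∘A) x, 0)` and `T ∘ T†` has domain `H × D(A∘A)` with
`(T ∘ T†) (x, y) = (0, (A∘A) y)`; hence the self-commutator `T ∘ T† - T† ∘ T`, given on
`D(A∘A) × D(A∘A)` by `(x, y) ↦ (-(A∘A) x, (A∘A) y)`, is unbounded.  Moreover, the operators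
`P (x, y) = (A x, 0)` on `D(A) × H` and `Q (x, y) = (0, A y)` on `H × D(A)` are positive
self-adjoint with `P ∘ P = T† ∘ T` and `Q ∘ Q = T ∘ T†` (so `P = |T|` and `Q = |T†|`), and
both `P ∘ Q` and `Q ∘ P` are zero on their dense domains, so `P ∘ Q - Q ∘ P` is bounded. -/
theorem stmt_15 {H : Type} [NormedAddCommGroup H] [InnerProductSpace ℂ H] [CompleteSpace H]
    (A : H →ₗ.[ℂ] H) (hA_sa : A† = A) (hA_pos : IsPosOp A) (hA_unb : ¬ IsBddOp A)
    (T P Q : HxH H →ₗ.[ℂ] HxH H)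
    (hTdom : T.domain = (Submodule.prod A.domain ⊤).comap (prodE H).toLinearMap)
    (hT : ∀ x : T.domain, ∀ h1 : (prodE H (x : HxH H)).1 ∈ A.domain,
      prodE H (T x) = (0, A ⟨(prodE H (x : HxH H)).1, h1⟩))
    (hPdom : P.domain = (Submodule.prod A.domain ⊤).comap (prodE H).toLinearMap)
    (hP : ∀ x : P.domain, ∀ h1 : (prodE H (x : HxH H)).1 ∈ A.domain,
      prodE H (P x) = (A ⟨(prodE H (x : HxH H)).1, h1⟩, 0))
    (hQdom : Q.domain = (Submodule.prod ⊤ A.domain).comap (prodE H).toLinearMap)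
    (hQ : ∀ x : Q.domain, ∀ h2 : (prodE H (x : HxH H)).2 ∈ A.domain,
      prodE H (Q x) = (0, A ⟨(prodE H (x : HxH H)).2, h2⟩)) :
    -- `T` is densely defined and closed:
    Dense (T.domain : Set (HxH H)) ∧ T.IsClosed ∧
    -- `T†` has domain `H × D(A)` and acts by `(x, y) ↦ (A y, 0)`:
    (T†).domain = (Submodule.prod ⊤ A.domain).comap (prodE H).toLinearMap ∧
    (∀ y : (T†).domain, ∀ h2 : (prodE H (y : HxH H)).2 ∈ A.domain,
      prodE H (T† y) = (A ⟨(prodE H (y : HxH H)).2, h2⟩, 0)) ∧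
    -- `T† ∘ T` has domain `D(A∘A) × H` and acts by `(x, y) ↦ ((A∘A) x, 0)`:
    (pComp (T†) T).domain =
      (Submodule.prod (pComp A A).domain ⊤).comap (prodE H).toLinearMap ∧
    (∀ z : (pComp (T†) T).domain, ∀ h1 : (prodE H (z : HxH H)).1 ∈ (pComp A A).domain,
      prodE H (pComp (T†) T z) = (pComp A A ⟨(prodE H (z : HxH H)).1, h1⟩, 0)) ∧
    -- `T ∘ T†` has domain `H × D(A∘A)` and acts by `(x, y) ↦ (0, (A∘A) y)`:
    (pComp T (T†)).domain =
      (Submodule.prod ⊤ (pComp A A).domain).comap (prodE H).toLinearMap ∧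
    (∀ z : (pComp T (T†)).domain, ∀ h2 : (prodE H (z : HxH H)).2 ∈ (pComp A A).domain,
      prodE H (pComp T (T†) z) = (0, pComp A A ⟨(prodE H (z : HxH H)).2, h2⟩)) ∧
    -- the self-commutator acts on `D(A∘A) × D(A∘A)` by `(x, y) ↦ (-(A∘A) x, (A∘A) y)` and is
    -- unbounded:
    (pComp T (T†) - pComp (T†) T).domain =
      (Submodule.prod (pComp A A).domain (pComp A A).domain).comap (prodE H).toLinearMap ∧
    (∀ z : (pComp T (T†) - pComp (T†) T).domain,
      ∀ (h1 : (prodE H (z : HxH H)).1 ∈ (pComp A A).domain)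
        (h2 : (prodE H (z : HxH H)).2 ∈ (pComp A A).domain),
      prodE H ((pComp T (T†) - pComp (T†) T) z) =
        (-(pComp A A ⟨(prodE H (z : HxH H)).1, h1⟩), pComp A A ⟨(prodE H (z : HxH H)).2, h2⟩)) ∧
    ¬ IsBddOp (pComp T (T†) - pComp (T†) T) ∧
    -- `P = |T|` and `Q = |T†|`:
    IsPosOp P ∧ P† = P ∧ IsPosOp Q ∧ Q† = Q ∧
    pComp P P = pComp (T†) T ∧ pComp Q Q = pComp T (T†) ∧
    -- `P ∘ Q` and `Q ∘ P` are zero on their dense domains, so `P ∘ Q - Q ∘ P` is bounded: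
    Dense ((pComp P Q).domain : Set (HxH H)) ∧ (∀ z : (pComp P Q).domain, pComp P Q z = 0) ∧
    Dense ((pComp Q P).domain : Set (HxH H)) ∧ (∀ z : (pComp Q P).domain, pComp Q P z = 0) ∧
    IsBddOp (pComp P Q - pComp Q P) := by

  have hT' : ∀ (x : T.domain) (h : getc true (x : HxH H) ∈ A.domain),
      (T x : HxH H) = put false (A ⟨getc true (x : HxH H), h⟩) := by
    intro x h
    apply (prodE H).injective
    rw [hT x h]
    exact ((prodE H).apply_symm_apply _).symm
  have hP' : ∀ (x : P.domain) (h : getc true (x : HxH H) ∈ A.domain),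
      (P x : HxH H) = put true (A ⟨getc true (x : HxH H), h⟩) := by
    intro x h
    apply (prodE H).injective
    rw [hP x h]
    exact ((prodE H).apply_symm_apply _).symm
  have hQ' : ∀ (x : Q.domain) (h : getc false (x : HxH H) ∈ A.domain),
      (Q x : HxH H) = put false (A ⟨getc false (x : HxH H), h⟩) := by
    intro x h
    apply (prodE H).injective
    rw [hQ x h]
    exact ((prodE H).apply_symm_apply _).symm
  have hTdom' : T.domain = (pr true A.domain).comap (prodE H).toLinearMap := hTdom
  have hPdom' : P.domain = (pr true A.domain).comap (prodE H).toLinearMap := hPdom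
  have hQdom' : Q.domain = (pr false A.domain).comap (prodE H).toLinearMap := hQdom
  have adjT := adj_coord hA_sa true false hTdom' hT'
  have compTT := pComp_coord_match true false true hTdom' hT' adjT.1 adjT.2
  have compTdT := pComp_coord_match false true false adjT.1 adjT.2 hTdom' hT'
  have matchPP := pComp_coord_match true true true hPdom' hP' hPdom' hP'
  have matchQQ := pComp_coord_match false false false hQdom' hQ' hQdom' hQ'
  have misPQ := pComp_coord_mismatch false false true hQdom' hQ' hPdom' hP'
  have misQP := pComp_coord_mismatch true true false hPdom' hP' hQdom' hQ'
  have adjP := adj_coord hA_sa true true hPdom' hP'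
  have adjQ := adj_coord hA_sa false false hQdom' hQ'
  have hsubdom : (pComp T (T†) - pComp (T†) T).domain =
      (Submodule.prod (pComp A A).domain (pComp A A).domain).comap (prodE H).toLinearMap := by
    rw [LinearPMap.sub_domain, compTdT.1, compTT.1]
    ext z
    rw [Submodule.mem_inf]
    constructor
    · rintro ⟨h1, h2⟩
      exact Submodule.mem_comap.mpr
        (Submodule.mem_prod.mpr ⟨mem_prcomap.mp h2, mem_prcomap.mp h1⟩)
    · intro h
      have h' := Submodule.mem_prod.mp (Submodule.mem_comap.mp h)
      exact ⟨mem_prcomap.mpr h'.2, mem_prcomap.mpr h'.1⟩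
  refine ⟨?_, ?_, ?_, ?_, ?_, ?_, ?_, ?_, ?_, ?_, ?_, ?_, ?_, ?_, ?_, ?_, ?_, ?_, ?_, ?_, ?_, ?_⟩
  · -- T densely defined
    rw [hTdom]
    exact dense_prcomap (i := true) (sa_dense hA_sa)
  · -- T closed
    exact coord_isClosed (sa_isClosed hA_sa) true false hTdom' hT'
  · -- T† domain
    exact adjT.1
  · -- T† value
    intro y h2
    rw [adjT.2 y h2]
    exact (prodE H).apply_symm_apply _
  · -- T† ∘ T domain
    exact compTT.1
  · -- T† ∘ T value
    intro z h1
    rw [compTT.2 z h1]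
    exact (prodE H).apply_symm_apply _
  · -- T ∘ T† domain
    exact compTdT.1
  · -- T ∘ T† value
    intro z h2
    rw [compTdT.2 z h2]
    exact (prodE H).apply_symm_apply _
  · -- commutator domain
    exact hsubdom
  · -- commutator value
    intro z h1 h2
    have hm2 : (z : HxH H) ∈ (pComp T (T†)).domain ⊓ (pComp (T†) T).domain := z.2
    have e1 : (pComp T (T†) - pComp (T†) T) z =
        pComp T (T†) ⟨(z : HxH H), hm2.1⟩ - pComp (T†) T ⟨(z : HxH H), hm2.2⟩ := rfl
    rw [e1, compTdT.2 ⟨(z : HxH H), hm2.1⟩ h2, compTT.2 ⟨(z : HxH H), hm2.2⟩ h1, _root_.map_sub,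
      prodE_put, prodE_put]
    exact Prod.ext (by simp [getc]) (by simp [getc])
  · -- commutator unbounded
    rintro ⟨C, hC0, hC⟩
    apply hA_unb
    have hCb : ∀ (x : H) (hx : x ∈ (pComp A A).domain),
        ‖pComp A A ⟨x, hx⟩‖ ≤ C * ‖x‖ := by
      intro x hx
      have hmem : (put true x : HxH H) ∈ (pComp T (T†) - pComp (T†) T).domain := by
        rw [hsubdom]
        apply Submodule.mem_comap.mpr
        have hpe : prodE H (put true x) = (x, 0) := (prodE H).apply_symm_apply _
        rw [LinearEquiv.coe_coe, hpe]
        exact Submodule.mem_prod.mpr ⟨hx, Submodule.zero_mem _⟩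
      have hm2 : (put true x : HxH H) ∈ (pComp T (T†)).domain ⊓ (pComp (T†) T).domain := hmem
      have hval := hC ⟨put true x, hmem⟩
      have hv : (pComp T (T†) - pComp (T†) T) ⟨put true x, hmem⟩ =
          pComp T (T†) ⟨put true x, hm2.1⟩ - pComp (T†) T ⟨put true x, hm2.2⟩ := rfl
      have hgf : getc false ((put true x : HxH H)) ∈ (pComp A A).domain := by
        have h0 : getc false ((put true x : HxH H)) = 0 := getc_put_not true x
        rw [h0]
        exact Submodule.zero_mem _
      have hgt : getc true ((put true x : HxH H)) ∈ (pComp A A).domain := by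
        rw [getc_put]
        exact hx
      have hv1 := compTdT.2 ⟨put true x, hm2.1⟩ hgf
      have hv2 := compTT.2 ⟨put true x, hm2.2⟩ hgt
      have hz0 : (⟨getc false ((put true x : HxH H)), hgf⟩ : (pComp A A).domain) = 0 :=
        Subtype.ext (getc_put_not true x)
      rw [hz0, LinearPMap.map_zero, put_zero] at hv1
      have hxx : (⟨getc true ((put true x : HxH H)), hgt⟩ : (pComp A A).domain) = ⟨x, hx⟩ :=
        Subtype.ext (getc_put true x)
      rw [hxx] at hv2
      calc ‖pComp A A ⟨x, hx⟩‖
          = ‖(pComp T (T†) - pComp (T†) T) ⟨put true x, hmem⟩‖ := by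
            rw [hv, hv1, hv2, zero_sub, norm_neg, norm_put]
        _ ≤ C * ‖((⟨put true x, hmem⟩ : (pComp T (T†) - pComp (T†) T).domain) : HxH H)‖ := hval
        _ = C * ‖x‖ := by rw [show ‖((⟨put true x, hmem⟩ :
              (pComp T (T†) - pComp (T†) T).domain) : HxH H)‖ = ‖x‖ from norm_put true x]
    have hb : ∀ (x : A.domain), A x ∈ A.domain → ‖A x‖ ≤ Real.sqrt C * ‖(x : H)‖ := by
      intro x hx
      have hxd : (x : H) ∈ (pComp A A).domain := (mem_pComp_domain A A).mpr ⟨x.2, hx⟩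
      have hAA : pComp A A ⟨(x : H), hxd⟩ = A ⟨A x, hx⟩ := pComp_apply A A ⟨(x : H), hxd⟩ x.2 hx
      have h1 := hCb (x : H) hxd
      rw [hAA] at h1
      have hin := sa_symm hA_sa ⟨A x, hx⟩ x
      have h2 : (inner ℂ (A x) (A x) : ℂ) = (‖A x‖ : ℂ) ^ 2 := inner_self_eq_norm_sq_to_K _
      have hsq : ‖A x‖ ^ 2 ≤ C * ‖(x : H)‖ ^ 2 := by
        calc ‖A x‖ ^ 2 = ‖(inner ℂ (A ⟨A x, hx⟩) ((x : H)) : ℂ)‖ := by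
              rw [hin, h2]
              simp [norm_pow, Complex.norm_real, Real.norm_eq_abs, abs_norm]
          _ ≤ ‖A ⟨A x, hx⟩‖ * ‖(x : H)‖ := norm_inner_le_norm _ _
          _ ≤ (C * ‖(x : H)‖) * ‖(x : H)‖ :=
              mul_le_mul_of_nonneg_right h1 (norm_nonneg _)
          _ = C * ‖(x : H)‖ ^ 2 := by ring
      have h3 : ‖A x‖ ≤ Real.sqrt (C * ‖(x : H)‖ ^ 2) := by
        rw [← Real.sqrt_sq (norm_nonneg (A x))]
        exact Real.sqrt_le_sqrt hsq
      rwa [Real.sqrt_mul hC0, Real.sqrt_sq (norm_nonneg ((x : H)))] at h3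
    exact ⟨Real.sqrt C, Real.sqrt_nonneg C,
      sa_bound_of_sq_bound hA_sa hA_pos (Real.sqrt_nonneg C) hb⟩
  · -- P positive
    intro x
    have hx1 : getc true (x : HxH H) ∈ A.domain := mem_prcomap.mp (by rw [← hPdom']; exact x.2)
    rw [hP' x hx1, inner_put_left]
    exact hA_pos ⟨getc true (x : HxH H), hx1⟩
  · -- P self-adjoint
    apply LinearPMap.ext (adjP.1.trans hPdom'.symm)
    intro x₀ hf hg
    set x : (P†).domain := ⟨x₀, hf⟩
    set y : P.domain := ⟨x₀, hg⟩
    have hxy : (x : HxH H) = y := rfl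
    have hx := mem_prcomap.mp (by rw [← adjP.1]; exact x.2)
    have hy := mem_prcomap.mp (by rw [← hPdom']; exact y.2)
    rw [adjP.2 x hx, hP' y hy]
  · -- Q positive
    intro x
    have hx1 : getc false (x : HxH H) ∈ A.domain := mem_prcomap.mp (by rw [← hQdom']; exact x.2)
    rw [hQ' x hx1, inner_put_left]
    exact hA_pos ⟨getc false (x : HxH H), hx1⟩
  · -- Q self-adjoint
    apply LinearPMap.ext (adjQ.1.trans hQdom'.symm)
    intro x₀ hf hg
    set x : (Q†).domain := ⟨x₀, hf⟩
    set y : Q.domain := ⟨x₀, hg⟩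
    have hxy : (x : HxH H) = y := rfl
    have hx := mem_prcomap.mp (by rw [← adjQ.1]; exact x.2)
    have hy := mem_prcomap.mp (by rw [← hQdom']; exact y.2)
    rw [adjQ.2 x hx, hQ' y hy]
  · -- P ∘ P = T† ∘ T
    apply LinearPMap.ext (matchPP.1.trans compTT.1.symm)
    intro x₀ hf hg
    set x : (pComp P P).domain := ⟨x₀, hf⟩
    set y : (pComp (T†) T).domain := ⟨x₀, hg⟩
    have hxy : (x : HxH H) = y := rfl
    have hx := mem_prcomap.mp (by rw [← matchPP.1]; exact x.2)
    have hy := mem_prcomap.mp (by rw [← compTT.1]; exact y.2)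
    rw [matchPP.2 x hx, compTT.2 y hy]
  · -- Q ∘ Q = T ∘ T†
    apply LinearPMap.ext (matchQQ.1.trans compTdT.1.symm)
    intro x₀ hf hg
    set x : (pComp Q Q).domain := ⟨x₀, hf⟩
    set y : (pComp T (T†)).domain := ⟨x₀, hg⟩
    have hxy : (x : HxH H) = y := rfl
    have hx := mem_prcomap.mp (by rw [← matchQQ.1]; exact x.2)
    have hy := mem_prcomap.mp (by rw [← compTdT.1]; exact y.2)
    rw [matchQQ.2 x hx, compTdT.2 y hy]
  · -- P ∘ Q densely defined
    rw [misPQ.1]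
    exact dense_prcomap (i := false) (sa_dense hA_sa)
  · -- P ∘ Q = 0
    exact misPQ.2
  · -- Q ∘ P densely defined
    rw [misQP.1]
    exact dense_prcomap (i := true) (sa_dense hA_sa)
  · -- Q ∘ P = 0
    exact misQP.2
  · -- P ∘ Q - Q ∘ P bounded
    refine ⟨0, le_refl 0, fun z => ?_⟩
    have hm2 : (z : HxH H) ∈ (pComp P Q).domain ⊓ (pComp Q P).domain := z.2
    have hv : (pComp P Q - pComp Q P) z =
        pComp P Q ⟨(z : HxH H), hm2.1⟩ - pComp Q P ⟨(z : HxH H), hm2.2⟩ := rfl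
    rw [hv, misPQ.2 ⟨(z : HxH H), hm2.1⟩, misQP.2 ⟨(z : HxH H), hm2.2⟩, sub_zero]
    simp
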